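/- Let q = (v, a, b, c) be a quadrilateral in the plane (vertices in this cyclic order, forming a simple closed polygon) such that the four sides va, ab, bc, cv each cross the y-axis in exactly one interior point, and v lies strictly to the left of the y-axis (v_x < 0) while its neighbors a and c lie strictly to the right. Then v is a reflex vertex of q or the quadrilateral is non-convex; in particular, a quadrilateral all of whose edges cross a common line cannot be convex. -/
import Mathlib


open Set

private lemma seg_left {v b : ℝ × ℝ} (hv : v.1 < 0) (hb : b.1 < 0) {x : ℝ × ℝ}
    (hx : x ∈ segment ℝ v b) : x.1 < 0 := by
  obtain ⟨u, t, hu, ht, hut, rfl⟩ := hx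
  have h : (u • v + t • b).1 = u * v.1 + t * b.1 := rfl
  rw [h]
  rcases hu.lt_or_eq with hu' | hu'
  · have h1 : u * v.1 < 0 := mul_neg_of_pos_of_neg hu' hv
    have h2 : t * b.1 ≤ 0 := by
      rcases ht.lt_or_eq with h' | h'
      · exact (mul_neg_of_pos_of_neg h' hb).le
      · rw [← h']; simp
    linarith
  · have ht1 : t = 1 := by linarith
    rw [← hu', ht1]; simpa using hb

private lemma seg_right {a c : ℝ × ℝ} (ha : 0 < a.1) (hc : 0 < c.1) {x : ℝ × ℝ}
    (hx : x ∈ segment ℝ a c) : 0 < x.1 := by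
  obtain ⟨u, t, hu, ht, hut, rfl⟩ := hx
  have h : (u • a + t • c).1 = u * a.1 + t * c.1 := rfl
  rw [h]
  rcases hu.lt_or_eq with hu' | hu'
  · have h1 : 0 < u * a.1 := mul_pos hu' ha
    have h2 : 0 ≤ t * c.1 := mul_nonneg ht hc.le
    linarith
  · have ht1 : t = 1 := by linarith
    rw [← hu', ht1]; simpa using hc

/-- A simple quadrilateral `v a b c` (in this cyclic order) whose vertices alternate
strictly between the two open halfplanes determined by the y-axis (`v`, `b` on the
left; `a`, `c` on the right; so each side crosses the axis) is non-convex: some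
vertex lies in the convex hull of the other three. -/
theorem alternating_quadrilateral_nonconvex (v a b c : ℝ × ℝ)
    (hv : v.1 < 0) (hb : b.1 < 0) (ha : 0 < a.1) (hc : 0 < c.1)
    -- the quadrilateral is simple: consecutive sides meet only at their shared
    -- vertex and opposite sides are disjoint
    (h₁ : segment ℝ v a ∩ segment ℝ a b = {a})
    (h₂ : segment ℝ a b ∩ segment ℝ b c = {b})
    (h₃ : segment ℝ b c ∩ segment ℝ c v = {c})
    (h₄ : segment ℝ c v ∩ segment ℝ v a = {v})
    (h₅ : segment ℝ v a ∩ segment ℝ b c = ∅)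
    (h₆ : segment ℝ a b ∩ segment ℝ c v = ∅) :
    v ∈ convexHull ℝ ({a, b, c} : Set (ℝ × ℝ)) ∨
      a ∈ convexHull ℝ ({v, b, c} : Set (ℝ × ℝ)) ∨
      b ∈ convexHull ℝ ({v, a, c} : Set (ℝ × ℝ)) ∨
      c ∈ convexHull ℝ ({v, a, b} : Set (ℝ × ℝ)) := by
  classical
  set f : Fin 4 → ℝ × ℝ := ![v, a, b, c] with hf
  have hdep : ¬ AffineIndependent ℝ f := by
    intro h
    have h1 := h.card_le_finrank_succ
    have h2 : Module.finrank ℝ (vectorSpan ℝ (Set.range f)) ≤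
        Module.finrank ℝ (ℝ × ℝ) := Submodule.finrank_le _
    simp only [Fintype.card_fin] at h1
    have h3 : Module.finrank ℝ (ℝ × ℝ) = 2 := by
      simp [Module.finrank_prod]
    omega
  obtain ⟨I, x, hxI, hxIc⟩ := Convex.radon_partition hdep
  have himg : ∀ (S : Set (Fin 4)) (T : Set (ℝ × ℝ)),
      (0 ∈ S → v ∈ T) → (1 ∈ S → a ∈ T) → (2 ∈ S → b ∈ T) → (3 ∈ S → c ∈ T) →
      f '' S ⊆ T := by
    intro S T t0 t1 t2 t3
    rintro _ ⟨j, hj, rfl⟩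
    fin_cases j
    · exact t0 hj
    · exact t1 hj
    · exact t2 hj
    · exact t3 hj
  -- specialized consequences
  have hempty : ∀ (S : Set (Fin 4)), f '' S ⊆ ∅ →
      ∀ {y : ℝ × ℝ}, y ∈ convexHull ℝ (f '' S) → False := by
    intro S hS y hy
    have := convexHull_mono hS hy
    simp at this
  have hsing : ∀ (S : Set (Fin 4)) (p : ℝ × ℝ), f '' S ⊆ {p} →
      ∀ {y : ℝ × ℝ}, y ∈ convexHull ℝ (f '' S) → y = p := by
    intro S p hS y hy
    have := convexHull_mono hS hy
    simpa using this
  have hpair : ∀ (S : Set (Fin 4)) (p q : ℝ × ℝ), f '' S ⊆ {p, q} →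
      ∀ {y : ℝ × ℝ}, y ∈ convexHull ℝ (f '' S) → y ∈ segment ℝ p q := by
    intro S p q hS y hy
    have := convexHull_mono hS hy
    rwa [convexHull_pair] at this
  have htriple : ∀ (S : Set (Fin 4)) (T : Set (ℝ × ℝ)), f '' S ⊆ T →
      ∀ {y : ℝ × ℝ}, y ∈ convexHull ℝ (f '' S) → y ∈ convexHull ℝ T :=
    fun S T hS y hy => convexHull_mono hS hy
  have memI : ∀ {j : Fin 4}, j ∈ I → j ∈ I := fun h => h
  by_cases m0 : (0 : Fin 4) ∈ I <;> by_cases m1 : (1 : Fin 4) ∈ I <;>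
    by_cases m2 : (2 : Fin 4) ∈ I <;> by_cases m3 : (3 : Fin 4) ∈ I
  -- TTTT : Iᶜ empty
  · exact absurd hxIc (fun h => hempty Iᶜ
      (himg _ _ (fun h => absurd m0 h) (fun h => absurd m1 h)
        (fun h => absurd m2 h) (fun h => absurd m3 h)) h)
  -- TTTF : Iᶜ = {3}, x = c
  · refine Or.inr (Or.inr (Or.inr ?_))
    have hx : x = c := hsing Iᶜ c
      (himg _ _ (fun h => absurd m0 h) (fun h => absurd m1 h)
        (fun h => absurd m2 h) (fun _ => rfl)) hxIc
    rw [← hx]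
    exact htriple I {v, a, b}
      (himg _ _ (fun _ => by simp) (fun _ => by simp) (fun _ => by simp)
        (fun h => absurd h m3)) hxI
  -- TTFT : Iᶜ = {2}, x = b
  · refine Or.inr (Or.inr (Or.inl ?_))
    have hx : x = b := hsing Iᶜ b
      (himg _ _ (fun h => absurd m0 h) (fun h => absurd m1 h)
        (fun _ => rfl) (fun h => absurd m3 h)) hxIc
    rw [← hx]
    exact htriple I {v, a, c}
      (himg _ _ (fun _ => by simp) (fun _ => by simp) (fun h => absurd h m2)
        (fun _ => by simp)) hxI
  -- TTFF : I = {0,1} = {v,a}, Iᶜ = {b,c} : h₅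
  · exfalso
    have e1 : x ∈ segment ℝ v a := hpair I v a
      (himg _ _ (fun _ => by simp) (fun _ => by simp) (fun h => absurd h m2)
        (fun h => absurd h m3)) hxI
    have e2 : x ∈ segment ℝ b c := hpair Iᶜ b c
      (himg _ _ (fun h => absurd m0 h) (fun h => absurd m1 h) (fun _ => by simp)
        (fun _ => by simp)) hxIc
    have : x ∈ (∅ : Set (ℝ × ℝ)) := h₅ ▸ ⟨e1, e2⟩
    simp at this
  -- TFTT : Iᶜ = {1}, x = a
  · refine Or.inr (Or.inl ?_)
    have hx : x = a := hsing Iᶜ a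
      (himg _ _ (fun h => absurd m0 h) (fun _ => rfl) (fun h => absurd m2 h)
        (fun h => absurd m3 h)) hxIc
    rw [← hx]
    exact htriple I {v, b, c}
      (himg _ _ (fun _ => by simp) (fun h => absurd h m1) (fun _ => by simp)
        (fun _ => by simp)) hxI
  -- TFTF : I = {v,b}, Iᶜ = {a,c} : halfplane
  · exfalso
    have e1 : x ∈ segment ℝ v b := hpair I v b
      (himg _ _ (fun _ => by simp) (fun h => absurd h m1) (fun _ => by simp)
        (fun h => absurd h m3)) hxI
    have e2 : x ∈ segment ℝ a c := hpair Iᶜ a c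
      (himg _ _ (fun h => absurd m0 h) (fun _ => by simp) (fun h => absurd m2 h)
        (fun _ => by simp)) hxIc
    exact absurd (seg_right ha hc e2) (not_lt.2 (seg_left hv hb e1).le)
  -- TFFT : I = {v,c}, Iᶜ = {a,b} : h₆
  · exfalso
    have e1 : x ∈ segment ℝ c v := hpair I c v
      (himg _ _ (fun _ => by simp) (fun h => absurd h m1) (fun h => absurd h m2)
        (fun _ => by simp)) hxI
    have e2 : x ∈ segment ℝ a b := hpair Iᶜ a b
      (himg _ _ (fun h => absurd m0 h) (fun _ => by simp) (fun _ => by simp)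
        (fun h => absurd m3 h)) hxIc
    have : x ∈ (∅ : Set (ℝ × ℝ)) := h₆ ▸ ⟨e2, e1⟩
    simp at this
  -- TFFF : I = {0}, x = v
  · refine Or.inl ?_
    have hx : x = v := hsing I v
      (himg _ _ (fun _ => rfl) (fun h => absurd h m1) (fun h => absurd h m2)
        (fun h => absurd h m3)) hxI
    rw [← hx]
    exact htriple Iᶜ {a, b, c}
      (himg _ _ (fun h => absurd m0 h) (fun _ => by simp) (fun _ => by simp)
        (fun _ => by simp)) hxIc
  -- FTTT : Iᶜ = {0}, x = v
  · refine Or.inl ?_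
    have hx : x = v := hsing Iᶜ v
      (himg _ _ (fun _ => rfl) (fun h => absurd m1 h) (fun h => absurd m2 h)
        (fun h => absurd m3 h)) hxIc
    rw [← hx]
    exact htriple I {a, b, c}
      (himg _ _ (fun h => absurd h m0) (fun _ => by simp) (fun _ => by simp)
        (fun _ => by simp)) hxI
  -- FTTF : I = {a,b}, Iᶜ = {v,c} : h₆
  · exfalso
    have e1 : x ∈ segment ℝ a b := hpair I a b
      (himg _ _ (fun h => absurd h m0) (fun _ => by simp) (fun _ => by simp)
        (fun h => absurd h m3)) hxI
    have e2 : x ∈ segment ℝ c v := hpair Iᶜ c v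
      (himg _ _ (fun _ => by simp) (fun h => absurd m1 h) (fun h => absurd m2 h)
        (fun _ => by simp)) hxIc
    have : x ∈ (∅ : Set (ℝ × ℝ)) := h₆ ▸ ⟨e1, e2⟩
    simp at this
  -- FTFT : I = {a,c}, Iᶜ = {v,b} : halfplane
  · exfalso
    have e1 : x ∈ segment ℝ a c := hpair I a c
      (himg _ _ (fun h => absurd h m0) (fun _ => by simp) (fun h => absurd h m2)
        (fun _ => by simp)) hxI
    have e2 : x ∈ segment ℝ v b := hpair Iᶜ v b
      (himg _ _ (fun _ => by simp) (fun h => absurd m1 h) (fun _ => by simp)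
        (fun h => absurd m3 h)) hxIc
    exact absurd (seg_right ha hc e1) (not_lt.2 (seg_left hv hb e2).le)
  -- FTFF : I = {1}, x = a
  · refine Or.inr (Or.inl ?_)
    have hx : x = a := hsing I a
      (himg _ _ (fun h => absurd h m0) (fun _ => rfl) (fun h => absurd h m2)
        (fun h => absurd h m3)) hxI
    rw [← hx]
    exact htriple Iᶜ {v, b, c}
      (himg _ _ (fun _ => by simp) (fun h => absurd m1 h) (fun _ => by simp)
        (fun _ => by simp)) hxIc
  -- FFTT : I = {b,c}, Iᶜ = {v,a} : h₅
  · exfalso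
    have e1 : x ∈ segment ℝ b c := hpair I b c
      (himg _ _ (fun h => absurd h m0) (fun h => absurd h m1) (fun _ => by simp)
        (fun _ => by simp)) hxI
    have e2 : x ∈ segment ℝ v a := hpair Iᶜ v a
      (himg _ _ (fun _ => by simp) (fun _ => by simp) (fun h => absurd m2 h)
        (fun h => absurd m3 h)) hxIc
    have : x ∈ (∅ : Set (ℝ × ℝ)) := h₅ ▸ ⟨e2, e1⟩
    simp at this
  -- FFTF : I = {2}, x = b
  · refine Or.inr (Or.inr (Or.inl ?_))
    have hx : x = b := hsing I b
      (himg _ _ (fun h => absurd h m0) (fun h => absurd h m1) (fun _ => rfl)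
        (fun h => absurd h m3)) hxI
    rw [← hx]
    exact htriple Iᶜ {v, a, c}
      (himg _ _ (fun _ => by simp) (fun _ => by simp) (fun h => absurd m2 h)
        (fun _ => by simp)) hxIc
  -- FFFT : I = {3}, x = c
  · refine Or.inr (Or.inr (Or.inr ?_))
    have hx : x = c := hsing I c
      (himg _ _ (fun h => absurd h m0) (fun h => absurd h m1) (fun h => absurd h m2)
        (fun _ => rfl)) hxI
    rw [← hx]
    exact htriple Iᶜ {v, a, b}
      (himg _ _ (fun _ => by simp) (fun _ => by simp) (fun _ => by simp)
        (fun h => absurd m3 h)) hxIc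
  -- FFFF : I empty
  · exact absurd hxI (fun h => hempty I
      (himg _ _ (fun h => absurd h m0) (fun h => absurd h m1)
        (fun h => absurd h m2) (fun h => absurd h m3)) h)
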